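/- Let G be a prodiscrete topological group, and let G^∧ = Aut(F_G) be its prodiscrete completion, equipped with the group topology whose open subgroups are exactly the subgroups U_{X,x}. Then the map U ↦ ι_G⁻¹(U) is a bijection from the set of open subgroups of G^∧ to the set of open subgroups of G; this bijection sends normal subgroups to normal subgroups; and for every open subgroup U ⊆ G^∧, the map induced by ι_G from the coset space G/ι_G⁻¹(U) to the coset space G^∧/U is a bijection. In particular, ι_G : G → G^∧ is continuous. -/

import Mathlib

open CategoryTheory

universe u

namespace ProdiscreteCompletion

variable (G : Type u) [Group G] [TopologicalSpace G]

/-- The category `G-Set` of continuous discrete `G`-sets: `G`-sets in which the stabilizer of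
every point is an open subgroup of `G` (equivalently, the action map is continuous for the
discrete topology on the set). -/
abbrev ContGSet :=
  ObjectProperty.FullSubcategory (fun X : Action (Type u) G =>
    ∀ x : X.V, IsOpen {g : G | X.ρ g x = x})

/-- The forgetful functor `F_G : G-Set ⥤ Set` on continuous discrete `G`-sets. -/
abbrev forgetContGSet : ContGSet G ⥤ Type u :=
  ObjectProperty.ι _ ⋙ Action.forget _ _

variable {G}

/-- For `g : G`, the natural automorphism of the forgetful functor whose component at each
continuous discrete `G`-set `X` is the action of `g` on `X`. -/
def iotaIso (g : G) : forgetContGSet G ≅ forgetContGSet G :=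
  NatIso.ofComponents
    (fun X => Equiv.toIso
      { toFun := X.obj.ρ g
        invFun := X.obj.ρ g⁻¹
        left_inv := fun x => by
          have h : X.obj.ρ (g⁻¹ * g) x = X.obj.ρ g⁻¹ (X.obj.ρ g x) :=
            ConcreteCategory.congr_hom (X.obj.ρ.map_mul g⁻¹ g) x
          rw [inv_mul_cancel, map_one] at h
          exact h.symm
        right_inv := fun x => by
          have h : X.obj.ρ (g * g⁻¹) x = X.obj.ρ g (X.obj.ρ g⁻¹ x) :=
            ConcreteCategory.congr_hom (X.obj.ρ.map_mul g g⁻¹) x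
          rw [mul_inv_cancel, map_one] at h
          exact h.symm })
    (fun {X Y} f => by ext x; exact (ConcreteCategory.congr_hom (f.hom.comm g) x).symm)

variable (G)

/-- The canonical group homomorphism `ι_G : G → G^∧ = Aut (F_G)` sending `g ∈ G` to the
natural automorphism of the forgetful functor acting by `g` on each continuous discrete
`G`-set. -/
def iota : G →* Aut (forgetContGSet G) where
  toFun := iotaIso
  map_one' := by
    ext X x
    show (iotaIso 1).hom.app X x = _
    simp [iotaIso]
    rfl
  map_mul' g₁ g₂ := by
    ext X x
    have h : X.obj.ρ (g₁ * g₂) x = X.obj.ρ g₁ (X.obj.ρ g₂ x) :=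
      ConcreteCategory.congr_hom (X.obj.ρ.map_mul g₁ g₂) x
    exact h

variable {G}

/-- The stabilizer subgroup `U_{X,x} ⊆ Aut (F_G)` of a point `x` of a continuous discrete
`G`-set `X`. -/
def USub (X : ContGSet G) (x : X.obj.V) : Subgroup (Aut (forgetContGSet G)) where
  carrier := {γ | γ.hom.app X x = x}
  one_mem' := rfl
  mul_mem' := by
    intro γ δ hγ hδ
    show (γ * δ).hom.app X x = x
    rw [Aut.Aut_mul_def]
    show γ.hom.app X (δ.hom.app X x) = x
    rw [show δ.hom.app X x = x from hδ]
    exact hγ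
  inv_mem' := by
    intro γ hγ
    show γ⁻¹.hom.app X x = x
    conv_lhs => rw [← show γ.hom.app X x = x from hγ]
    rw [Aut.Aut_inv_def]
    exact ConcreteCategory.congr_hom (congrArg (fun τ : forgetContGSet G ⟶ forgetContGSet G => τ.app X)
      γ.hom_inv_id) x


section Aux

variable {G : Type u} [Group G] [TopologicalSpace G]

/-- The stabilizer of a point of a continuous discrete `G`-set, as a subgroup of `G`. -/
def stab (X : ContGSet G) (x : X.obj.V) : Subgroup G where
  carrier := {g : G | X.obj.ρ g x = x}
  one_mem' := by simpa using ConcreteCategory.congr_hom X.obj.ρ.map_one x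
  mul_mem' := by
    intro a b ha hb
    simp only [Set.mem_setOf_eq] at ha hb ⊢
    have h : X.obj.ρ (a * b) x = X.obj.ρ a (X.obj.ρ b x) := ConcreteCategory.congr_hom (X.obj.ρ.map_mul a b) x
    rw [h, hb, ha]
  inv_mem' := by
    intro a ha
    simp only [Set.mem_setOf_eq] at ha ⊢
    have h : X.obj.ρ (a⁻¹ * a) x = X.obj.ρ a⁻¹ (X.obj.ρ a x) := ConcreteCategory.congr_hom (X.obj.ρ.map_mul a⁻¹ a) x
    rw [inv_mul_cancel, ha] at h
    have h1 : X.obj.ρ (1 : G) x = x := by simpa using ConcreteCategory.congr_hom X.obj.ρ.map_one x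
    rw [h1] at h
    exact h.symm

theorem iota_app (g : G) (X : ContGSet G) (x : X.obj.V) :
    (iota G g).hom.app X x = X.obj.ρ g x := rfl

theorem mem_uSub {γ : Aut (forgetContGSet G)} {X : ContGSet G} {x : X.obj.V} :
    γ ∈ USub X x ↔ γ.hom.app X x = x := Iff.rfl

theorem comap_uSub (X : ContGSet G) (x : X.obj.V) :
    (USub X x).comap (iota G) = stab X x := rfl

theorem mul_app (γ δ : Aut (forgetContGSet G)) (X : ContGSet G) (x : X.obj.V) :
    (γ * δ).hom.app X x = γ.hom.app X (δ.hom.app X x) := rfl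

theorem hom_inv_app (γ : Aut (forgetContGSet G)) (X : ContGSet G) (x : X.obj.V) :
    γ.hom.app X (γ⁻¹.hom.app X x) = x := by
  rw [Aut.Aut_inv_def]
  exact ConcreteCategory.congr_hom (congrArg (fun τ : forgetContGSet G ⟶ forgetContGSet G => τ.app X)
    γ.inv_hom_id) x

variable [IsTopologicalGroup G]

/-- The coset space `G ⧸ H` of an open subgroup, as a continuous discrete `G`-set. -/
def quotGSet (H : Subgroup G) (hH : IsOpen (H : Set G)) : ContGSet G where
  obj := Action.ofMulAction G (G ⧸ H)
  property := by
    intro q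
    refine QuotientGroup.induction_on q fun g => ?_
    have hset : {g' : G |
          (Action.ofMulAction G (G ⧸ H)).ρ g' (QuotientGroup.mk g) = QuotientGroup.mk g}
        = (fun g' : G => g⁻¹ * g'⁻¹ * g) ⁻¹' (H : Set G) := by
      ext g'
      simp only [Set.mem_setOf_eq, Set.mem_preimage, SetLike.mem_coe, Action.ofMulAction_apply]
      erw [show (g' • (QuotientGroup.mk g : G ⧸ H)) = QuotientGroup.mk (g' * g) from rfl,
        QuotientGroup.eq, show (g' * g)⁻¹ * g = g⁻¹ * g'⁻¹ * g by group]
    rw [hset]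
    exact hH.preimage (by continuity)

theorem stab_quotGSet (H : Subgroup G) (hH : IsOpen (H : Set G)) :
    stab (quotGSet H hH) (QuotientGroup.mk (1 : G)) = H := by
  ext g
  show (g • (QuotientGroup.mk (1 : G) : G ⧸ H)) = QuotientGroup.mk (1 : G) ↔ g ∈ H
  rw [show (g • (QuotientGroup.mk (1 : G) : G ⧸ H)) = QuotientGroup.mk (g * 1) from rfl,
    mul_one, QuotientGroup.eq]
  simp [H.inv_mem_iff]

/-- The canonical `G`-equivariant map `G ⧸ stab X x ⟶ X`, sending `g • stab` to `g • x`. -/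
def orbitHom (X : ContGSet G) (x : X.obj.V)
    (hH : IsOpen ((stab X x : Subgroup G) : Set G)) : quotGSet (stab X x) hH ⟶ X :=
  ObjectProperty.homMk
  { hom := TypeCat.ofHom fun q => Quotient.liftOn' q (fun g => X.obj.ρ g x) (by
    intro a b hab
    have hab' : X.obj.ρ (a⁻¹ * b) x = x := QuotientGroup.leftRel_apply.mp hab
    have h : X.obj.ρ (a * (a⁻¹ * b)) x = X.obj.ρ a (X.obj.ρ (a⁻¹ * b) x) :=
      ConcreteCategory.congr_hom (X.obj.ρ.map_mul a (a⁻¹ * b)) x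
    rw [mul_inv_cancel_left, hab'] at h
    exact h.symm)
    comm := fun g => by
      ext q
      refine QuotientGroup.induction_on q fun a => ?_
      exact ConcreteCategory.congr_hom (X.obj.ρ.map_mul g a) x }

theorem orbitHom_one (X : ContGSet G) (x : X.obj.V)
    (hH : IsOpen ((stab X x : Subgroup G) : Set G)) :
    (orbitHom X x hH).hom.hom (QuotientGroup.mk (1 : G)) = x := by
  show X.obj.ρ (1 : G) x = x
  simpa using ConcreteCategory.congr_hom X.obj.ρ.map_one x

theorem uSub_eq_quot (X : ContGSet G) (x : X.obj.V) (H : Subgroup G) (hH : IsOpen (H : Set G))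
    (hs : stab X x = H) :
    USub X x = USub (quotGSet H hH) (QuotientGroup.mk (1 : G)) := by
  subst hs
  ext γ
  have key : ∀ q : G ⧸ stab X x,
      γ.hom.app X ((orbitHom X x hH).hom.hom q)
        = (orbitHom X x hH).hom.hom (γ.hom.app (quotGSet (stab X x) hH) q) :=
    fun q => ConcreteCategory.congr_hom (γ.hom.naturality (orbitHom X x hH)) q
  have h2 := key (QuotientGroup.mk (1 : G))
  rw [orbitHom_one] at h2
  erw [mem_uSub, mem_uSub]
  constructor
  · intro hγ
    obtain ⟨g, hg⟩ :=
      QuotientGroup.mk_surjective (γ.hom.app (quotGSet (stab X x) hH) (QuotientGroup.mk (1 : G)))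
    rw [← hg] at h2 ⊢
    have h3 : X.obj.ρ g x = x := by
      have hf : (orbitHom X x hH).hom.hom (QuotientGroup.mk g) = X.obj.ρ g x := rfl
      rw [hf] at h2
      rw [← h2]
      exact hγ
    erw [QuotientGroup.eq]
    simpa using (stab X x).inv_mem h3
  · intro hγ
    rw [hγ, orbitHom_one] at h2
    exact h2

/-- Multiplication in the quotient group, with explicitly given types. -/
def qmul (H : Subgroup G) [H.Normal] (a b : G ⧸ H) : G ⧸ H := a * b

theorem qmul_one (H : Subgroup G) [H.Normal] (q : G ⧸ H) :
    qmul H (QuotientGroup.mk (1 : G)) q = q := by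
  show (QuotientGroup.mk (1 : G) : G ⧸ H) * q = q
  rw [QuotientGroup.mk_one, one_mul]

theorem rmul_comm_aux (H : Subgroup G) [H.Normal] (b : G ⧸ H) (g : G) (q : G ⧸ H) :
    (g • q : G ⧸ H) * b = g • (q * b) := by
  refine QuotientGroup.induction_on q fun a => ?_
  refine QuotientGroup.induction_on b fun c => ?_
  rw [MulAction.Quotient.smul_mk, ← QuotientGroup.mk_mul, ← QuotientGroup.mk_mul,
    MulAction.Quotient.smul_mk, smul_eq_mul, smul_eq_mul, mul_assoc]

/-- Right multiplication by a coset, as an endomorphism of `G ⧸ H` for `H` normal. -/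
def rmulHom (H : Subgroup G) (hH : IsOpen (H : Set G)) [H.Normal] (b : G ⧸ H) :
    quotGSet H hH ⟶ quotGSet H hH :=
  ObjectProperty.homMk
  { hom := TypeCat.ofHom fun q => qmul H q b
    comm := fun g => by
      ext q
      exact rmul_comm_aux H b g q }

theorem app_quot_eq (H : Subgroup G) (hH : IsOpen (H : Set G)) [H.Normal]
    (γ : Aut (forgetContGSet G)) (q : G ⧸ H) :
    γ.hom.app (quotGSet H hH) q
      = qmul H (γ.hom.app (quotGSet H hH) (QuotientGroup.mk (1 : G))) q := by
  have h : γ.hom.app (quotGSet H hH) (qmul H (QuotientGroup.mk (1 : G)) q)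
      = qmul H (γ.hom.app (quotGSet H hH) (QuotientGroup.mk (1 : G))) q :=
    ConcreteCategory.congr_hom (γ.hom.naturality (rmulHom H hH q)) (QuotientGroup.mk (1 : G))
  rw [qmul_one] at h
  exact h

end Aux

/-- Lemma `L:1` of the paper.  Let `G` be a prodiscrete topological group and
equip its prodiscrete completion `G^∧ = Aut (F_G)` with the group topology whose open subgroups
are exactly the stabilizer subgroups `U_{X,x}`.  Then `U ↦ ι_G⁻¹(U)` is a bijection from the
open subgroups of `G^∧` to the open subgroups of `G`, this bijection matches up normal
subgroups with normal subgroups, and for every open `U ⊆ G^∧` the map induced by `ι_G` on coset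
spaces `G/ι_G⁻¹(U) → G^∧/U` is a bijection.  In particular, `ι_G` is continuous. -/
theorem open_subgroup_correspondence_of_completion
    (G : Type u) [Group G] [TopologicalSpace G] [IsTopologicalGroup G]
    (hG : (nhds (1 : G)).HasBasis (fun H : Subgroup G => IsOpen (H : Set G))
      (fun H : Subgroup G => (H : Set G)))
    (t : TopologicalSpace (Aut (forgetContGSet G)))
    (ht : @IsTopologicalGroup (Aut (forgetContGSet G)) t _)
    (htop : ∀ K : Subgroup (Aut (forgetContGSet G)),
      @IsOpen _ t (K : Set (Aut (forgetContGSet G))) ↔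
        ∃ (X : ContGSet G) (x : X.obj.V), K = USub X x)
    (hbasis : (@nhds _ t 1).HasBasis
      (fun K : Subgroup (Aut (forgetContGSet G)) => @IsOpen _ t (K : Set (Aut (forgetContGSet G))))
      (fun K => (K : Set (Aut (forgetContGSet G))))) :
    Set.BijOn (fun K : Subgroup (Aut (forgetContGSet G)) => K.comap (iota G))
      {K : Subgroup (Aut (forgetContGSet G)) | @IsOpen _ t (K : Set (Aut (forgetContGSet G)))}
      {H : Subgroup G | IsOpen (H : Set G)} ∧
    (∀ K : Subgroup (Aut (forgetContGSet G)),
      @IsOpen _ t (K : Set (Aut (forgetContGSet G))) →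
        (K.Normal ↔ (K.comap (iota G)).Normal)) ∧
    (∀ K : Subgroup (Aut (forgetContGSet G)),
      @IsOpen _ t (K : Set (Aut (forgetContGSet G))) →
        ∃ e : G ⧸ K.comap (iota G) → Aut (forgetContGSet G) ⧸ K,
          (∀ g : G, e (QuotientGroup.mk g) = QuotientGroup.mk (iota G g)) ∧
          Function.Bijective e) ∧
    @Continuous G (Aut (forgetContGSet G)) _ t (iota G) := by
  letI := t
  haveI := ht
  have hmaps : ∀ K : Subgroup (Aut (forgetContGSet G)),
      IsOpen (K : Set (Aut (forgetContGSet G))) →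
        IsOpen ((K.comap (iota G) : Subgroup G) : Set G) := by
    intro K hK
    obtain ⟨X, x, rfl⟩ := (htop K).mp hK
    rw [comap_uSub]
    exact X.property x
  refine ⟨⟨?_, ?_, ?_⟩, ?_, ?_, ?_⟩
  · -- MapsTo
    intro K hK
    exact hmaps K hK
  · -- InjOn
    intro K₁ h₁ K₂ h₂ hcomap
    obtain ⟨X, x, rfl⟩ := (htop K₁).mp h₁
    obtain ⟨Y, y, rfl⟩ := (htop K₂).mp h₂
    have hs : stab X x = stab Y y := by
      rw [← comap_uSub X x, ← comap_uSub Y y]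
      exact hcomap
    have hoX : IsOpen ((stab X x : Subgroup G) : Set G) := X.property x
    rw [uSub_eq_quot X x (stab X x) hoX rfl, uSub_eq_quot Y y (stab X x) hoX hs.symm]
  · -- SurjOn
    intro H hH
    refine ⟨USub (quotGSet H hH) (QuotientGroup.mk (1 : G)), ?_, ?_⟩
    · exact (htop _).mpr ⟨_, _, rfl⟩
    · show (USub (quotGSet H hH) (QuotientGroup.mk (1 : G))).comap (iota G) = H
      erw [comap_uSub, stab_quotGSet]
  · -- Normality
    intro K hK
    obtain ⟨X, x, rfl⟩ := (htop K).mp hK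
    constructor
    · intro hN
      exact hN.comap _
    · intro hN
      rw [comap_uSub] at hN
      haveI : (stab X x).Normal := hN
      have hoX : IsOpen ((stab X x : Subgroup G) : Set G) := X.property x
      rw [uSub_eq_quot X x (stab X x) hoX rfl]
      constructor
      intro δ hδ γ
      erw [mem_uSub] at hδ ⊢
      erw [mul_app, mul_app, app_quot_eq (stab X x) hoX δ, hδ, qmul_one]
      exact hom_inv_app γ _ _
  · -- coset bijection
    intro K hK
    obtain ⟨X, x, rfl⟩ := (htop K).mp hK
    refine ⟨fun q => Quotient.liftOn' q (fun g => QuotientGroup.mk (iota G g)) ?_, ?_, ?_, ?_⟩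
    · intro a b hab
      have hab' : a⁻¹ * b ∈ (USub X x).comap (iota G) := QuotientGroup.leftRel_apply.mp hab
      rw [Subgroup.mem_comap, map_mul, map_inv] at hab'
      exact QuotientGroup.eq.mpr hab'
    · intro g
      rfl
    · -- injective
      intro q₁ q₂ h
      obtain ⟨a, rfl⟩ := QuotientGroup.mk_surjective q₁
      obtain ⟨b, rfl⟩ := QuotientGroup.mk_surjective q₂
      have hab : (QuotientGroup.mk (iota G a) : _ ⧸ USub X x) = QuotientGroup.mk (iota G b) := h
      have h1 : (iota G a)⁻¹ * iota G b ∈ USub X x := QuotientGroup.eq.mp hab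
      rw [← map_inv, ← map_mul] at h1
      exact QuotientGroup.eq.mpr h1
    · -- surjective
      intro qγ
      obtain ⟨γ, rfl⟩ := QuotientGroup.mk_surjective qγ
      have hoX : IsOpen ((stab X x : Subgroup G) : Set G) := X.property x
      have hquot := uSub_eq_quot X x (stab X x) hoX rfl
      obtain ⟨g, hg⟩ := QuotientGroup.mk_surjective
        (γ.hom.app (quotGSet (stab X x) hoX) (QuotientGroup.mk (1 : G)))
      refine ⟨QuotientGroup.mk g, ?_⟩
      show (QuotientGroup.mk (iota G g) : _ ⧸ USub X x) = QuotientGroup.mk γ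
      erw [QuotientGroup.eq, hquot, mem_uSub, mul_app, ← map_inv (iota G) g, iota_app, ← hg]
      show (g⁻¹ • (QuotientGroup.mk g : G ⧸ stab X x)) = QuotientGroup.mk (1 : G)
      rw [show (g⁻¹ • (QuotientGroup.mk g : G ⧸ stab X x)) = QuotientGroup.mk (g⁻¹ * g) from rfl,
        inv_mul_cancel]
  · -- continuity
    refine continuous_of_continuousAt_one (iota G) ?_
    show Filter.Tendsto (iota G) (nhds (1 : G)) (nhds (iota G (1 : G)))
    rw [map_one, hbasis.tendsto_right_iff]
    intro K hK
    have hopen : IsOpen ((K.comap (iota G) : Subgroup G) : Set G) := hmaps K hK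
    exact hopen.mem_nhds (K.comap (iota G)).one_mem

end ProdiscreteCompletion
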